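/- Let A be a Hermitian n×n complex matrix with spectral resolution E (so E(δ) is the matrix of the orthogonal projection onto the sum of eigenspaces ker(A − λI) over eigenvalues λ ∈ δ). Let Σ be an r×r nonnegative matrix measure on ℝ with Σ(ℝ) = I_r (a generalized resolution of the identity on ℂʳ). Then the following are equivalent: (i) Σ is spectrally subordinated to E, i.e. Σ(δ) = 0 for every Borel set δ containing no eigenvalue of A, and for every eigenvalue λ of A, rank Σ({λ}) ≤ dim ker(A − λI); (ii) there exists an n×r complex matrix W with Wᴴ W = I_r such that Σ(δ) = Wᴴ E(δ) W for every Borel set δ. -/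

import Mathlib

open MeasureTheory Module Matrix
open scoped ComplexOrder
open scoped InnerProductSpace

/-- The self-adjoint endomorphism of `ℂⁿ` (with the Euclidean inner product)
associated with a matrix `A`. -/
noncomputable def matEnd (n : ℕ) (A : Matrix (Fin n) (Fin n) ℂ) :
    Module.End ℂ (EuclideanSpace ℂ (Fin n)) :=
  Matrix.toEuclideanLin A

/-- The spectral resolution of identity of a Hermitian matrix `A`, as a
matrix-valued set function: `specRes n A δ` is the matrix of the orthogonal
projection onto the sum of the eigenspaces `ker (A - λ)` over eigenvalues
`λ ∈ δ`. -/
noncomputable def specRes (n : ℕ) (A : Matrix (Fin n) (Fin n) ℂ) (δ : Set ℝ) :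
    Matrix (Fin n) (Fin n) ℂ :=
  Matrix.toEuclideanLin.symm
    ((⨆ μ ∈ δ, (matEnd n A).eigenspace (μ : ℂ)).subtype ∘ₗ
      (Submodule.orthogonalProjection (⨆ μ ∈ δ, (matEnd n A).eigenspace (μ : ℂ))).toLinearMap)

variable {n : ℕ} {A : Matrix (Fin n) (Fin n) ℂ}

lemma aux_symm (hA : A.IsHermitian) : (matEnd n A).IsSymmetric :=
  Matrix.isHermitian_iff_isSymmetric.mp hA

lemma aux_apply (hA : A.IsHermitian) (j : Fin n) :
    matEnd n A (hA.eigenvectorBasis j) = (hA.eigenvalues j : ℂ) • hA.eigenvectorBasis j := by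
  have := hA.mulVec_eigenvectorBasis j
  apply (WithLp.equiv 2 _).injective
  ext i
  simpa [matEnd, Matrix.toEuclideanLin_apply] using congrFun this i

lemma aux_mem_eigenspace (hA : A.IsHermitian) (j : Fin n) :
    hA.eigenvectorBasis j ∈ (matEnd n A).eigenspace (hA.eigenvalues j : ℂ) :=
  Module.End.mem_eigenspace_iff.mpr (aux_apply hA j)

/-- span characterization -/
lemma aux_span (hA : A.IsHermitian) (δ : Set ℝ) :
    (⨆ μ ∈ δ, (matEnd n A).eigenspace (μ : ℂ)) =
      Submodule.span ℂ (⇑hA.eigenvectorBasis '' {i | hA.eigenvalues i ∈ δ}) := by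
  apply le_antisymm
  · refine iSup₂_le fun μ hμ x hx => ?_
    rw [Module.End.mem_eigenspace_iff] at hx
    have hrepr := hA.eigenvectorBasis.sum_repr' x
    rw [← hrepr]
    refine Submodule.sum_mem _ fun i _ => ?_
    by_cases hi : hA.eigenvalues i ∈ δ
    · exact Submodule.smul_mem _ _ (Submodule.subset_span ⟨i, hi, rfl⟩)
    · have h1 : ⟪matEnd n A (hA.eigenvectorBasis i), x⟫_ℂ =
          ⟪hA.eigenvectorBasis i, matEnd n A x⟫_ℂ := aux_symm hA _ _
      rw [aux_apply hA i, hx, inner_smul_left, inner_smul_right] at h1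
      have h2 : ((hA.eigenvalues i : ℂ) - (μ : ℂ)) * ⟪hA.eigenvectorBasis i, x⟫_ℂ = 0 := by
        rw [sub_mul]
        rw [Complex.conj_ofReal] at h1
        rw [h1]; ring
      have h3 : (hA.eigenvalues i : ℂ) ≠ (μ : ℂ) := by
        intro h
        exact hi (by rwa [Complex.ofReal_inj] at h ▸ hμ)
      have : ⟪hA.eigenvectorBasis i, x⟫_ℂ = 0 :=
        by rcases mul_eq_zero.mp h2 with h | h
           · exact absurd (sub_eq_zero.mp h) h3
           · exact h
      rw [this, zero_smul]
      exact Submodule.zero_mem _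
  · rw [Submodule.span_le]
    rintro x ⟨i, hi, rfl⟩
    exact Submodule.mem_iSup_of_mem (hA.eigenvalues i)
      (Submodule.mem_iSup_of_mem hi (aux_mem_eigenspace hA i))

lemma aux_mem_orthogonal_span {E : Type*} [NormedAddCommGroup E] [InnerProductSpace ℂ E]
    (s : Set E) (x : E) (h : ∀ u ∈ s, ⟪u, x⟫_ℂ = 0) : x ∈ (Submodule.span ℂ s)ᗮ := by
  rw [Submodule.mem_orthogonal]
  intro u hu
  induction hu using Submodule.span_induction with
  | mem u hu => exact h u hu
  | zero => simp
  | add u v _ _ hu hv => simp [inner_add_left, hu, hv]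
  | smul c u _ hu => simp [inner_smul_left, hu]

lemma aux_specRes (hA : A.IsHermitian) (δ : Set ℝ) [DecidablePred (· ∈ δ)] :
    specRes n A δ = (hA.eigenvectorUnitary : Matrix (Fin n) (Fin n) ℂ) *
      Matrix.diagonal (fun i => if hA.eigenvalues i ∈ δ then (1 : ℂ) else 0) *
      (hA.eigenvectorUnitary : Matrix (Fin n) (Fin n) ℂ)ᴴ := by
  rw [specRes, LinearEquiv.symm_apply_eq]
  apply Basis.ext hA.eigenvectorBasis.toBasis
  intro j
  rw [OrthonormalBasis.coe_toBasis]
  have hrhs : Matrix.toEuclideanLin ((hA.eigenvectorUnitary : Matrix (Fin n) (Fin n) ℂ) *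
      Matrix.diagonal (fun i => if hA.eigenvalues i ∈ δ then (1 : ℂ) else 0) *
      (hA.eigenvectorUnitary : Matrix (Fin n) (Fin n) ℂ)ᴴ) (hA.eigenvectorBasis j) =
      (if hA.eigenvalues j ∈ δ then (1 : ℂ) else 0) • hA.eigenvectorBasis j := by
    apply (WithLp.equiv 2 _).injective
    rw [show ∀ (M : Matrix (Fin n) (Fin n) ℂ) (v : EuclideanSpace ℂ (Fin n)), WithLp.equiv 2 _ (Matrix.toEuclideanLin M v) = M *ᵥ WithLp.equiv 2 _ v from fun _ _ => rfl]
    have h0 : (WithLp.equiv 2 (Fin n → ℂ)) (hA.eigenvectorBasis j) = ⇑(hA.eigenvectorBasis j) := rfl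
    rw [h0, ← Matrix.mulVec_mulVec, ← Matrix.mulVec_mulVec,
      ← Matrix.star_eq_conjTranspose, hA.star_eigenvectorUnitary_mulVec j,
      Matrix.diagonal_mulVec_single]
    rw [mul_one]
    have h1 : (Pi.single j (if hA.eigenvalues j ∈ δ then (1:ℂ) else 0) : Fin n → ℂ)
        = (if hA.eigenvalues j ∈ δ then (1:ℂ) else 0) • (Pi.single j 1 : Fin n → ℂ) := by
      funext i
      by_cases h : i = j <;> simp [h, Pi.single_apply]
    rw [h1, Matrix.mulVec_smul, hA.eigenvectorUnitary_mulVec]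
    rfl
  rw [hrhs]
  simp only [LinearMap.comp_apply, Submodule.subtype_apply, ContinuousLinearMap.coe_coe]
  by_cases hj : hA.eigenvalues j ∈ δ
  · rw [if_pos hj, one_smul]
    rw [Submodule.coe_orthogonalProjectionOnto_apply, Submodule.starProjection_eq_self_iff.mpr]
    exact Submodule.mem_iSup_of_mem (hA.eigenvalues j)
      (Submodule.mem_iSup_of_mem hj (aux_mem_eigenspace hA j))
  · rw [if_neg hj, zero_smul]
    rw [Submodule.orthogonalProjectionOnto_apply_of_mem_orthogonal]
    · rfl
    rw [aux_span hA δ]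
    apply aux_mem_orthogonal_span
    rintro u ⟨i, hi, rfl⟩
    have hij : i ≠ j := fun h => hj (h ▸ hi)
    simpa using hA.eigenvectorBasis.orthonormal.2 hij

lemma aux_eigenvalue_iff (hA : A.IsHermitian) (μ : ℝ) :
    (matEnd n A).HasEigenvalue (μ : ℂ) ↔ ∃ i, hA.eigenvalues i = μ := by
  constructor
  · intro h
    by_contra hc
    push_neg at hc
    have hspan := aux_span hA {μ}
    have h1 : (⨆ t ∈ ({μ} : Set ℝ), (matEnd n A).eigenspace (t : ℂ)) =
        (matEnd n A).eigenspace (μ : ℂ) := by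
      simp
    have h2 : (⇑hA.eigenvectorBasis '' {i | hA.eigenvalues i ∈ ({μ} : Set ℝ)}) = ∅ := by
      simp only [Set.mem_singleton_iff]
      rw [Set.image_eq_empty]
      ext i; simp [hc i]
    rw [h1, h2, Submodule.span_empty] at hspan
    exact h hspan
  · rintro ⟨i, rfl⟩
    exact Module.End.hasEigenvalue_of_hasEigenvector
      ⟨aux_mem_eigenspace hA i, hA.eigenvectorBasis.orthonormal.ne_zero i⟩

lemma aux_finrank (hA : A.IsHermitian) (μ : ℝ) :
    Module.finrank ℂ ((matEnd n A).eigenspace (μ : ℂ)) =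
      Nat.card {i : Fin n // hA.eigenvalues i = μ} := by
  classical
  have hspan := aux_span hA {μ}
  have h1 : (⨆ t ∈ ({μ} : Set ℝ), (matEnd n A).eigenspace (t : ℂ)) =
      (matEnd n A).eigenspace (μ : ℂ) := by simp
  rw [h1] at hspan
  have h2 : (⇑hA.eigenvectorBasis '' {i | hA.eigenvalues i ∈ ({μ} : Set ℝ)}) =
      Set.range (fun i : {i : Fin n // hA.eigenvalues i ∈ ({μ} : Set ℝ)} =>
        hA.eigenvectorBasis i) :=
    Set.image_eq_range _ _
  have hli : LinearIndependent ℂ (fun i : {i : Fin n // hA.eigenvalues i ∈ ({μ} : Set ℝ)} =>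
      hA.eigenvectorBasis ↑i) :=
    (hA.eigenvectorBasis.orthonormal.comp _ Subtype.val_injective).linearIndependent
  rw [hspan, h2, finrank_span_eq_card hli, ← Nat.card_eq_fintype_card]
  exact Nat.card_congr (Equiv.subtypeEquivRight (by simp))

lemma aux_factor {r : ℕ} {ι : Type*} [Fintype ι] [DecidableEq ι]
    (S : Matrix (Fin r) (Fin r) ℂ) (hS : S.PosSemidef) (h : S.rank ≤ Fintype.card ι) :
    ∃ C : Matrix ι (Fin r) ℂ, Cᴴ * C = S := by
  classical
  set e := hS.1.eigenvalues with he
  set V := (hS.1.eigenvectorUnitary : Matrix (Fin r) (Fin r) ℂ) with hV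
  set T : Matrix (Fin r) (Fin r) ℂ := Matrix.diagonal (fun i => (Real.sqrt (e i) : ℂ)) * Vᴴ
    with hT
  have hTT : Tᴴ * T = S := by
    rw [hT, Matrix.conjTranspose_mul, Matrix.conjTranspose_conjTranspose,
      Matrix.diagonal_conjTranspose, mul_assoc, ← mul_assoc (Matrix.diagonal _),
      Matrix.diagonal_mul_diagonal]
    have hd : (fun i => star (fun i => ((Real.sqrt (e i) : ℂ))) i * (Real.sqrt (e i) : ℂ))
        = fun i => (e i : ℂ) := by
      funext i
      simp only [Pi.star_apply, Complex.star_def, Complex.conj_ofReal]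
      rw [← Complex.ofReal_mul, Real.mul_self_sqrt (hS.eigenvalues_nonneg i)]
    rw [hd]
    conv_rhs => rw [hS.1.spectral_theorem]
    rw [Unitary.conjStarAlgAut_apply, Matrix.star_eq_conjTranspose, mul_assoc]
    rfl
  have hTzero : ∀ i : Fin r, e i = 0 → ∀ j, T i j = 0 := by
    intro i hi j
    rw [hT, Matrix.diagonal_mul, hi]
    simp
  -- embedding
  have hcard : Fintype.card {i : Fin r // e i ≠ 0} ≤ Fintype.card ι := by
    rw [← hS.1.rank_eq_card_non_zero_eigs]; exact h
  obtain ⟨f⟩ := Function.Embedding.nonempty_of_card_le hcard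
  refine ⟨fun k j => if hk : ∃ i : {i : Fin r // e i ≠ 0}, f i = k
      then T (hk.choose : {i : Fin r // e i ≠ 0}).1 j else 0, ?_⟩
  ext a b
  erw [Matrix.mul_apply]
  change (∑ k, star (if hk : ∃ i : {i : Fin r // e i ≠ 0}, f i = k then T (hk.choose : {i : Fin r // e i ≠ 0}).1 a else 0) *
      (if hk : ∃ i : {i : Fin r // e i ≠ 0}, f i = k then T (hk.choose : {i : Fin r // e i ≠ 0}).1 b else 0)) = S a b
  have hstep1 : ∀ i : {i : Fin r // e i ≠ 0},
      (fun k => star (if hk : ∃ i' : {i : Fin r // e i ≠ 0}, f i' = k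
          then T (hk.choose : {i : Fin r // e i ≠ 0}).1 a else 0) *
        (if hk : ∃ i' : {i : Fin r // e i ≠ 0}, f i' = k
          then T (hk.choose : {i : Fin r // e i ≠ 0}).1 b else 0)) (f i)
        = star (T i.1 a) * T i.1 b := by
    intro i
    have hk : ∃ i' : {i : Fin r // e i ≠ 0}, f i' = f i := ⟨i, rfl⟩
    have : hk.choose = i := f.injective hk.choose_spec
    simp only [dif_pos hk, this]
  rw [← Finset.sum_subset (Finset.subset_univ (Finset.univ.map f))]
  · rw [Finset.sum_map]
    rw [Finset.sum_congr rfl (fun i _ => hstep1 i)]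
    have : ∑ i : {i : Fin r // e i ≠ 0}, star (T i.1 a) * T i.1 b
        = ∑ i ∈ Finset.univ.filter (fun i => e i ≠ 0), star (T i a) * T i b :=
      (Finset.sum_subtype (Finset.univ.filter fun i => e i ≠ 0) (by simp)
        (fun i => star (T i a) * T i b)).symm
    rw [this, ← hTT, Matrix.mul_apply]
    simp only [Matrix.conjTranspose_apply]
    apply Finset.sum_subset (Finset.filter_subset _ _)
    intro i _ hi
    simp only [Finset.mem_filter, Finset.mem_univ, true_and, not_not] at hi
    rw [hTzero i hi a]
    simp
  · intro k _ hk
    have hno : ¬ ∃ i' : {i : Fin r // e i ≠ 0}, f i' = k := by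
      intro ⟨i', hi'⟩
      exact hk (Finset.mem_map.mpr ⟨i', Finset.mem_univ _, hi'⟩)
    simp only [dif_neg hno, star_zero, zero_mul]

lemma aux_sum_singletons {r : ℕ} (S : VectorMeasure ℝ (Matrix (Fin r) (Fin r) ℂ))
    (F : Finset ℝ) : S ↑F = ∑ t ∈ F, S {t} := by
  classical
  induction F using Finset.induction_on with
  | empty => simpa using S.empty
  | insert a F' ha ih =>
    have hcoe : (↑(insert a F') : Set ℝ) = {a} ∪ ↑F' := by
      rw [Finset.coe_insert, Set.insert_eq]
    rw [hcoe, S.of_union (Set.disjoint_singleton_left.mpr (by simpa using ha))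
      (measurableSet_singleton a) (F'.finite_toSet.measurableSet), ih,
      Finset.sum_insert ha]

lemma aux_decomp {r : ℕ} (hA : A.IsHermitian) [DecidableEq ℝ]
    (S : VectorMeasure ℝ (Matrix (Fin r) (Fin r) ℂ))
    (hzero : ∀ δ : Set ℝ, MeasurableSet δ →
      (∀ μ ∈ δ, ¬ (matEnd n A).HasEigenvalue (μ : ℂ)) → S δ = 0)
    (δ : Set ℝ) [DecidablePred (· ∈ δ)] (hδ : MeasurableSet δ) :
    S δ = ∑ t ∈ (Finset.univ.image hA.eigenvalues).filter (· ∈ δ), S {t} := by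
  set F := (Finset.univ.image hA.eigenvalues).filter (· ∈ δ) with hF
  have hsub : (↑F : Set ℝ) ⊆ δ := by
    intro t ht
    simp only [F, Finset.coe_filter, Set.mem_setOf_eq] at ht
    exact ht.2
  have hδeq : δ = (δ \ ↑F) ∪ ↑F := by
    rw [Set.diff_union_of_subset hsub]
  have hmF : MeasurableSet (↑F : Set ℝ) := F.finite_toSet.measurableSet
  have h1 : S δ = S (δ \ ↑F) + S ↑F := by
    conv_lhs => rw [hδeq]
    exact S.of_union Set.disjoint_sdiff_left (hδ.diff hmF) hmF
  have h2 : S (δ \ ↑F) = 0 := by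
    apply hzero _ (hδ.diff hmF)
    intro μ hμ hev
    obtain ⟨i, hi⟩ := (aux_eigenvalue_iff hA μ).mp hev
    refine hμ.2 ?_
    simp only [F, Finset.coe_filter, Set.mem_setOf_eq]
    exact ⟨Finset.mem_image.mpr ⟨i, Finset.mem_univ i, hi⟩, hμ.1⟩
  rw [h1, h2, zero_add, aux_sum_singletons]

/-- **Theorem 2(b), finite-dimensional case (a supplement to Naimark's theorem).**
Let `A` be a Hermitian `n × n` matrix with resolution of identity `E = specRes n A`,
and let `S` be an `r × r` nonnegative matrix measure with `S(ℝ) = I` (a generalized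
resolution of the identity on `ℂʳ`).  Then `S` is spectrally subordinated to `E`
(`S(δ) = 0` whenever `δ` contains no eigenvalue of `A`, and
`rank S({λ}) ≤ dim ker (A - λ)` for every eigenvalue `λ`) if and only if there is an
isometry `W : ℂʳ → ℂⁿ` (an `n × r` matrix with `Wᴴ W = I`) such that
`S(δ) = Wᴴ E(δ) W` for every Borel set `δ`. -/
theorem stmt_12 (n r : ℕ) (A : Matrix (Fin n) (Fin n) ℂ) (hA : A.IsHermitian)
    (S : VectorMeasure ℝ (Matrix (Fin r) (Fin r) ℂ))
    (hpos : ∀ δ : Set ℝ, MeasurableSet δ → (S δ).PosSemidef)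
    (hS1 : S Set.univ = 1) :
    ((∀ δ : Set ℝ, MeasurableSet δ →
        (∀ μ ∈ δ, ¬ (matEnd n A).HasEigenvalue (μ : ℂ)) → S δ = 0) ∧
      (∀ μ : ℝ, (matEnd n A).HasEigenvalue (μ : ℂ) →
        (S {μ}).rank ≤ Module.finrank ℂ ((matEnd n A).eigenspace (μ : ℂ)))) ↔
    (∃ W : Matrix (Fin n) (Fin r) ℂ, Wᴴ * W = 1 ∧
      ∀ δ : Set ℝ, MeasurableSet δ → S δ = Wᴴ * specRes n A δ * W) := by
  classical
  set lam := hA.eigenvalues with hlam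
  set U := (hA.eigenvectorUnitary : Matrix (Fin n) (Fin n) ℂ) with hUdef
  have hU : Uᴴ * U = 1 := by
    rw [← Matrix.star_eq_conjTranspose]
    exact mul_eq_one_comm.mp ((Matrix.mem_unitaryGroup_iff).mp hA.eigenvectorUnitary.2)
  constructor
  · rintro ⟨hzero, hrank⟩
    -- the sets of indices with a given eigenvalue
    set ft : ℝ → Finset (Fin n) := fun t => Finset.univ.filter (fun i => lam i = t) with hft
    have hfac : ∀ t : ℝ, ∃ C : Matrix {i // i ∈ ft t} (Fin r) ℂ, Cᴴ * C = S {t} := by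
      intro t
      by_cases ht : (matEnd n A).HasEigenvalue (t : ℂ)
      · apply aux_factor _ (hpos {t} (measurableSet_singleton t))
        calc (S {t}).rank ≤ Module.finrank ℂ ((matEnd n A).eigenspace (t : ℂ)) := hrank t ht
          _ = Nat.card {i : Fin n // lam i = t} := aux_finrank hA t
          _ = Nat.card {i : Fin n // i ∈ ft t} :=
              Nat.card_congr (Equiv.subtypeEquivRight (by intro i; simp [hft]))
          _ = Fintype.card {i : Fin n // i ∈ ft t} := Nat.card_eq_fintype_card
      · have h0 : S {t} = 0 := by
          apply hzero {t} (measurableSet_singleton t)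
          intro μ hμ
          rw [Set.mem_singleton_iff] at hμ
          subst hμ
          exact ht
        exact ⟨0, by simp [h0]⟩
    choose C hC using hfac
    set B : Matrix (Fin n) (Fin r) ℂ :=
      fun i j => C (lam i) ⟨i, Finset.mem_filter.mpr ⟨Finset.mem_univ i, rfl⟩⟩ j with hB
    have key : ∀ δ : Set ℝ,
        Bᴴ * Matrix.diagonal (fun i => if lam i ∈ δ then (1 : ℂ) else 0) * B =
          ∑ t ∈ (Finset.univ.image lam).filter (· ∈ δ), S {t} := by
      intro δ
      ext a b
      rw [Matrix.mul_assoc, Matrix.mul_apply]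
      simp only [Matrix.conjTranspose_apply, Matrix.diagonal_mul]
      have hlhs : ∑ i : Fin n, star (B i a) * ((if lam i ∈ δ then (1:ℂ) else 0) * B i b)
          = ∑ i ∈ Finset.univ.filter (fun i => lam i ∈ δ), star (B i a) * B i b := by
        rw [Finset.sum_filter]
        refine Finset.sum_congr rfl fun i _ => ?_
        by_cases h : lam i ∈ δ <;> simp [h]
      rw [hlhs]
      have hrhs : ∀ t ∈ (Finset.univ.image lam).filter (· ∈ δ),
          (S {t}) a b = ∑ i ∈ ft t, star (B i a) * B i b := by
        intro t _
        rw [← hC t, Matrix.mul_apply]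
        simp only [Matrix.conjTranspose_apply]
        rw [← Finset.sum_coe_sort (ft t) (fun i => star (B i a) * B i b)]
        refine Finset.sum_congr rfl fun k _ => ?_
        rcases k with ⟨i, hi⟩
        have hit : lam i = t := (Finset.mem_filter.mp hi).2
        subst hit
        rfl
      have hdisj : (↑((Finset.univ.image lam).filter (· ∈ δ)) : Set ℝ).PairwiseDisjoint ft := by
        intro s _ t _ hst
        rw [Function.onFun, Finset.disjoint_left]
        intro i his hit
        exact hst ((Finset.mem_filter.mp his).2.symm.trans (Finset.mem_filter.mp hit).2)
      have hbi : ((Finset.univ.image lam).filter (· ∈ δ)).biUnion ft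
          = Finset.univ.filter (fun i => lam i ∈ δ) := by
        ext i
        simp only [Finset.mem_biUnion, Finset.mem_filter, Finset.mem_univ, true_and,
          Finset.mem_image, hft]
        constructor
        · rintro ⟨t, ht, hit⟩
          rw [hit]
          exact ht.2
        · intro h
          exact ⟨lam i, ⟨⟨i, rfl⟩, h⟩, rfl⟩
      rw [← hbi, Finset.sum_biUnion hdisj, Matrix.sum_apply]
      exact Finset.sum_congr rfl (fun t ht => (hrhs t ht).symm)
    refine ⟨U * B, ?_, ?_⟩
    · have h1 := key Set.univ
      simp only [Set.mem_univ, if_true, Matrix.diagonal_one, Matrix.mul_one,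
        Finset.filter_true] at h1
      have h2 := aux_decomp hA S hzero Set.univ MeasurableSet.univ
      simp only [Set.mem_univ, Finset.filter_true, ← hlam, hS1] at h2
      rw [Matrix.conjTranspose_mul, Matrix.mul_assoc, ← Matrix.mul_assoc Uᴴ U B, hU,
        Matrix.one_mul, h1, ← h2]
    · intro δ hδ
      rw [aux_specRes hA δ, Matrix.conjTranspose_mul]
      simp only [Matrix.mul_assoc]
      have e1 : Uᴴ * (U * B) = B := by rw [← Matrix.mul_assoc, hU, Matrix.one_mul]
      rw [e1]
      have e2 : Uᴴ * (U * (Matrix.diagonal (fun i => if lam i ∈ δ then (1:ℂ) else 0) * B))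
          = Matrix.diagonal (fun i => if lam i ∈ δ then (1:ℂ) else 0) * B := by
        rw [← Matrix.mul_assoc, hU, Matrix.one_mul]
      rw [e2, ← Matrix.mul_assoc, key δ]
      exact aux_decomp hA S hzero δ hδ
  · rintro ⟨W, hW, hSW⟩
    constructor
    · intro δ hδ hno
      rw [hSW δ hδ, aux_specRes hA δ]
      have hD : (fun i => if lam i ∈ δ then (1 : ℂ) else 0) = fun _ => (0 : ℂ) :=
        funext fun i => if_neg (fun h => hno _ h ((aux_eigenvalue_iff hA (lam i)).mpr ⟨i, rfl⟩))
      rw [hD]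
      simp
    · intro μ hμ
      rw [hSW {μ} (measurableSet_singleton μ), aux_specRes hA {μ}]
      have h1 : (Wᴴ * (U * Matrix.diagonal (fun i => if lam i ∈ ({μ} : Set ℝ) then (1:ℂ) else 0)
          * Uᴴ) * W).rank ≤ (Matrix.diagonal
            (fun i => if lam i ∈ ({μ} : Set ℝ) then (1:ℂ) else 0)).rank :=
        le_trans (Matrix.rank_mul_le_left _ _) (le_trans (Matrix.rank_mul_le_right _ _)
          (le_trans (Matrix.rank_mul_le_left _ _) (Matrix.rank_mul_le_right _ _)))
      refine le_trans h1 ?_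
      rw [Matrix.rank_diagonal, aux_finrank hA μ, ← Nat.card_eq_fintype_card]
      apply le_of_eq
      apply Nat.card_congr
      apply Equiv.subtypeEquivRight
      intro i
      simp [Set.mem_singleton_iff, ite_eq_right_iff, hlam]
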